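/- Let X be a compact Hausdorff topological space, let X₀ be a dense subset of X, and let A be a uniformly bounded set of continuous real-valued functions on X. Suppose that for every sequence (f_m) of elements of A and every sequence (x_n) of points of X₀, whenever both iterated limits lim_n lim_m f_m(x_n) and lim_m lim_n f_m(x_n) exist (all inner limits exist and the outer limits of the inner limits exist), they are equal. Then every function g : X → ℝ lying in the closure of A in the product topology on ℝ^X is continuous. -/

import Mathlib

open Filter Topology

private lemma gdl_tendsto_helper {u : ℕ → ℝ} {a : ℝ} {N : ℕ}
    (h : ∀ n, N ≤ n → |u n - a| < 1 / ((n : ℝ) + 1)) : Tendsto u atTop (𝓝 a) := by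
  rw [tendsto_iff_dist_tendsto_zero]
  have h1 : ∀ᶠ n in atTop, dist (u n) a ≤ 1 / ((n : ℝ) + 1) := by
    filter_upwards [eventually_ge_atTop N] with n hn
    rw [Real.dist_eq]
    exact (h n hn).le
  exact squeeze_zero' (Eventually.of_forall fun n => dist_nonneg) h1
    tendsto_one_div_add_atTop_nhds_zero_nat

private lemma gdl_key {X : Type*} [TopologicalSpace X]
    (X₀ : Set X) (A : Set (X → ℝ)) (g : X → ℝ) (C ε : ℝ) (hε : 0 < ε)
    (hgbd : ∀ u : X, |g u| ≤ C)
    (hdl : ∀ (f : ℕ → X → ℝ), (∀ m, f m ∈ A) →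
        ∀ (x : ℕ → X), (∀ n, x n ∈ X₀) →
        ∀ (c d : ℕ → ℝ) (r s : ℝ),
          (∀ n, Tendsto (fun m => f m (x n)) atTop (𝓝 (c n))) →
          Tendsto c atTop (𝓝 r) →
          (∀ m, Tendsto (fun n => f m (x n)) atTop (𝓝 (d m))) →
          Tendsto d atTop (𝓝 s) →
          r = s)
    (p : X)
    (happrox : ∀ S : Finset X, ∀ η : ℝ, 0 < η → ∃ f ∈ A, ∀ u ∈ S, |f u - g u| < η)
    (hpick : ∀ F : Finset (X → ℝ), ↑F ⊆ A → ∀ δ : ℝ, 0 < δ →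
        ∃ u ∈ X₀, (∀ f' ∈ F, |f' u - f' p| < δ) ∧ ε / 2 ≤ |g u - g p|) :
    False := by
  classical
  have hpos : ∀ l : List X, (0:ℝ) < 1 / ((l.length : ℝ) + 1) := fun l => by positivity
  -- choice of approximating functions
  choose fc hfcA hfc using fun l : List X =>
    happrox (insert p l.toFinset) (1 / ((l.length : ℝ) + 1)) (hpos l)
  -- choice of points
  have hFsub : ∀ l : List X,
      ↑((Finset.range (l.length + 1)).image fun j => fc (l.take j)) ⊆ A := by
    intro l f' hf'
    simp only [Finset.coe_image, Set.mem_image, Finset.mem_coe, Finset.mem_range] at hf'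
    obtain ⟨j, _, rfl⟩ := hf'
    exact hfcA _
  choose xc hxcX₀ hxc1 hxc2 using fun l : List X =>
    hpick ((Finset.range (l.length + 1)).image fun j => fc (l.take j)) (hFsub l)
      (1 / ((l.length : ℝ) + 1)) (hpos l)
  -- the list of points chosen so far
  let L : ℕ → List X := fun n => Nat.rec [] (fun _ l => l ++ [xc l]) n
  have hLs : ∀ n, L (n + 1) = L n ++ [xc (L n)] := fun n => rfl
  have hLlen : ∀ n, (L n).length = n := by
    intro n
    induction n with
    | zero => rfl
    | succ n ih => rw [hLs, List.length_append, ih]; rfl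
  have hLpre : ∀ {n m : ℕ}, n ≤ m → L n <+: L m := by
    intro n m h
    induction h with
    | refl => exact List.prefix_refl _
    | step h ih => exact ih.trans (by rw [hLs]; exact List.prefix_append _ _)
  have hLtake : ∀ {n m : ℕ}, n ≤ m → (L m).take n = L n := by
    intro n m h
    obtain ⟨t, ht⟩ := hLpre h
    rw [← ht, List.take_append_of_le_length (by rw [hLlen])]
    exact List.take_of_length_le (by rw [hLlen])
  have hmem : ∀ {n m : ℕ}, n < m → xc (L n) ∈ L m := by
    intro n m h
    have h1 : xc (L n) ∈ L (n + 1) := by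
      rw [hLs]; exact List.mem_append_right _ (List.mem_singleton_self _)
    exact (hLpre h).subset h1
  -- key estimates
  have hP2 : ∀ {n m : ℕ}, n < m →
      |fc (L m) (xc (L n)) - g (xc (L n))| < 1 / ((m : ℝ) + 1) := by
    intro n m h
    have := hfc (L m) (xc (L n))
      (Finset.mem_insert_of_mem (List.mem_toFinset.mpr (hmem h)))
    rwa [hLlen] at this
  have hP2p : ∀ m : ℕ, |fc (L m) p - g p| < 1 / ((m : ℝ) + 1) := by
    intro m
    have := hfc (L m) p (Finset.mem_insert_self _ _)
    rwa [hLlen] at this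
  have hP3 : ∀ {j n : ℕ}, j ≤ n →
      |fc (L j) (xc (L n)) - fc (L j) p| < 1 / ((n : ℝ) + 1) := by
    intro j n h
    have hmemF : fc (L j) ∈ (Finset.range ((L n).length + 1)).image
        fun i => fc ((L n).take i) := by
      apply Finset.mem_image.mpr
      exact ⟨j, Finset.mem_range.mpr (by rw [hLlen]; omega), by rw [hLtake h]⟩
    have := hxc1 (L n) _ hmemF
    rwa [hLlen] at this
  -- the limits
  have hc : ∀ n, Tendsto (fun m => fc (L m) (xc (L n))) atTop (𝓝 (g (xc (L n)))) := by
    intro n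
    exact gdl_tendsto_helper (N := n + 1) fun m hm => hP2 (by omega)
  have hd : ∀ m, Tendsto (fun n => fc (L m) (xc (L n))) atTop (𝓝 (fc (L m) p)) := by
    intro m
    exact gdl_tendsto_helper (N := m) fun n hn => hP3 hn
  have hds : Tendsto (fun m => fc (L m) p) atTop (𝓝 (g p)) :=
    gdl_tendsto_helper (N := 0) fun m _ => hP2p m
  -- Bolzano–Weierstrass on the bounded sequence g (x n)
  have hbc : ∀ n : ℕ, g (xc (L n)) ∈ Set.Icc (-C) C := fun n =>
    Set.mem_Icc.mpr (abs_le.mp (hgbd _))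
  obtain ⟨r, -, ψ, hψ, hcr⟩ := isCompact_Icc.tendsto_subseq hbc
  have hcr' : Tendsto (fun k => g (xc (L (ψ k)))) atTop (𝓝 r) := hcr
  have hr : r = g p := by
    refine hdl (fun m => fc (L m)) (fun m => hfcA _) (fun k => xc (L (ψ k)))
      (fun k => hxcX₀ _) (fun k => g (xc (L (ψ k)))) (fun m => fc (L m) p) r (g p)
      (fun k => hc (ψ k)) hcr' (fun m => (hd m).comp hψ.tendsto_atTop) hds
  have habs : Tendsto (fun k => |g (xc (L (ψ k))) - g p|) atTop (𝓝 |r - g p|) :=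
    (hcr'.sub tendsto_const_nhds).abs
  have hle : ε / 2 ≤ |r - g p| := ge_of_tendsto' habs fun k => hxc2 _
  rw [hr, sub_self, abs_zero] at hle
  linarith

/-- The main implication of Grothendieck's double limit theorem:
if the double limit condition holds for `A` relative to a dense set `X₀`,
then every function in the pointwise closure of `A` is continuous. -/
theorem continuous_of_double_limit {X : Type*} [TopologicalSpace X] [CompactSpace X] [T2Space X]
    (X₀ : Set X) (hX₀ : Dense X₀)
    (A : Set (X → ℝ)) (hcont : ∀ f ∈ A, Continuous f)
    (C : ℝ) (hbd : ∀ f ∈ A, ∀ x, |f x| ≤ C)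
    (hdl : ∀ (f : ℕ → X → ℝ), (∀ m, f m ∈ A) →
        ∀ (x : ℕ → X), (∀ n, x n ∈ X₀) →
        ∀ (c d : ℕ → ℝ) (r s : ℝ),
          (∀ n, Tendsto (fun m => f m (x n)) atTop (𝓝 (c n))) →
          Tendsto c atTop (𝓝 r) →
          (∀ m, Tendsto (fun n => f m (x n)) atTop (𝓝 (d m))) →
          Tendsto d atTop (𝓝 s) →
          r = s) :
    ∀ g ∈ closure A, Continuous g := by
  classical
  intro g hg
  by_contra hgc
  rw [continuous_iff_continuousAt] at hgc
  push_neg at hgc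
  obtain ⟨z, hz⟩ := hgc
  rw [ContinuousAt, Metric.tendsto_nhds] at hz
  push_neg at hz
  obtain ⟨ε, hε, hz⟩ := hz
  simp only [← not_lt] at hz
  -- approximation from the closure
  have happrox : ∀ S : Finset X, ∀ η : ℝ, 0 < η → ∃ f ∈ A, ∀ u ∈ S, |f u - g u| < η := by
    intro S η hη
    have hU : (↑S : Set X).pi (fun u => Metric.ball (g u) η) ∈ 𝓝 g :=
      set_pi_mem_nhds S.finite_toSet fun u _ => Metric.ball_mem_nhds _ hη
    obtain ⟨f, hfU, hfA⟩ := mem_closure_iff_nhds.mp hg _ hU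
    refine ⟨f, hfA, fun u hu => ?_⟩
    have := hfU u (by exact_mod_cast hu)
    rwa [Metric.mem_ball, Real.dist_eq] at this
  -- boundedness of g
  have hgbd : ∀ u : X, |g u| ≤ C := by
    intro u
    have hcl : IsClosed {h : X → ℝ | |h u| ≤ C} :=
      isClosed_le ((continuous_apply u).abs) continuous_const
    exact closure_minimal (fun f hf => hbd f hf u) hcl hg
  -- frequently, g is far from g z near z
  have hz' : ∀ U ∈ 𝓝 z, ∃ y ∈ U, ε ≤ |g y - g z| := by
    intro U hU
    obtain ⟨y, hyU, hy⟩ := (frequently_iff.mp hz) hU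
    rw [not_lt, Real.dist_eq] at hy
    exact ⟨y, hyU, hy⟩
  by_cases hQ : ∃ U ∈ 𝓝 z, ∀ u ∈ X₀ ∩ U, |g u - g z| < ε / 2
  · -- Case 2: pick a discontinuity witness y inside U and pivot at y
    obtain ⟨U, hU, hsmall⟩ := hQ
    obtain ⟨y, hyU, hy⟩ := hz' (interior U) (interior_mem_nhds.mpr hU)
    refine gdl_key X₀ A g C ε hε hgbd hdl y happrox ?_
    intro F hF δ hδ
    have hopen : IsOpen (interior U ∩ {u | ∀ f' ∈ F, |f' u - f' y| < δ}) := by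
      refine isOpen_interior.inter ?_
      have : {u | ∀ f' ∈ F, |f' u - f' y| < δ} = ⋂ f' ∈ F, {u | |f' u - f' y| < δ} := by
        ext u; simp
      rw [this]
      exact isOpen_biInter_finset fun f' hf' =>
        isOpen_lt (((hcont f' (hF hf')).sub continuous_const).abs) continuous_const
    have hne : (interior U ∩ {u | ∀ f' ∈ F, |f' u - f' y| < δ}).Nonempty :=
      ⟨y, hyU, fun f' _ => by simpa using hδ⟩
    obtain ⟨u, huX₀, huV⟩ := hX₀.exists_mem_open hopen hne
    refine ⟨u, huX₀, fun f' hf' => huV.2 f' hf', ?_⟩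
    have h1 : |g u - g z| < ε / 2 := hsmall u ⟨huX₀, interior_subset huV.1⟩
    have h2 : ε ≤ |g y - g z| := hy
    have htri := abs_sub_le (g y) (g u) (g z)
    rw [abs_sub_comm (g y) (g u)] at htri
    linarith
  · -- Case 1: pivot at z itself
    push_neg at hQ
    refine gdl_key X₀ A g C ε hε hgbd hdl z happrox ?_
    intro F hF δ hδ
    have hopen : IsOpen {u | ∀ f' ∈ F, |f' u - f' z| < δ} := by
      have : {u | ∀ f' ∈ F, |f' u - f' z| < δ} = ⋂ f' ∈ F, {u | |f' u - f' z| < δ} := by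
        ext u; simp
      rw [this]
      exact isOpen_biInter_finset fun f' hf' =>
        isOpen_lt (((hcont f' (hF hf')).sub continuous_const).abs) continuous_const
    have hUz : {u | ∀ f' ∈ F, |f' u - f' z| < δ} ∈ 𝓝 z :=
      hopen.mem_nhds (fun f' _ => by simpa using hδ)
    obtain ⟨u, huX₀u, hfar⟩ := hQ _ hUz
    obtain ⟨huX₀, huU⟩ := huX₀u
    exact ⟨u, huX₀, fun f' hf' => huU f' hf', hfar⟩
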